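/- Let $k$ be a field and $r,m\ge 1$. Consider the $r\times rm$ matrix over $k[x_1,\dots,x_m]$ given in block form by $(x_1\cdot 1_r \;|\; x_2\cdot 1_r \;|\; \cdots \;|\; x_m\cdot 1_r)$. Then the ideal generated by its $r\times r$ minors equals $(x_1,\dots,x_m)^r$. -/
import Mathlib


open MvPolynomial Pointwise

noncomputable section

/-- The `r × rm` block matrix `(x₁·1_r | x₂·1_r | ⋯ | x_m·1_r)` over `k[x₁,…,x_m]`,
with columns indexed by `Fin m × Fin r`. -/
def blockMat (k : Type*) [Field k] (r m : ℕ) :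
    Matrix (Fin r) (Fin m × Fin r) (MvPolynomial (Fin m) k) :=
  fun i c => if i = c.2 then X c.1 else 0

lemma prod_X_mem_pow {k : Type*} [Field k] {r m : ℕ} (j : Fin r → Fin m) :
    (∏ i : Fin r, (X (j i) : MvPolynomial (Fin m) k)) ∈
      (Ideal.span (Set.range (X : Fin m → MvPolynomial (Fin m) k))) ^ r := by
  have : ((Ideal.span (Set.range (X : Fin m → MvPolynomial (Fin m) k))) ^ r : Ideal _) =
      ∏ _i : Fin r, Ideal.span (Set.range (X : Fin m → MvPolynomial (Fin m) k)) := by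
    simp
  rw [this]
  exact Ideal.prod_mem_prod fun i _ =>
    Ideal.subset_span ⟨j i, rfl⟩

/-- the ideal generated by the `r × r` minors of
`(x₁·1_r | ⋯ | x_m·1_r)` equals `(x₁,…,x_m)^r`. -/
theorem minors_of_block_matrix (k : Type*) [Field k] (r m : ℕ) (hr : 1 ≤ r) (hm : 1 ≤ m) :
    Ideal.span {p : MvPolynomial (Fin m) k |
        ∃ s : Fin r → Fin m × Fin r, Function.Injective s ∧
          p = ((blockMat k r m).submatrix id s).det} =
      (Ideal.span (Set.range (X : Fin m → MvPolynomial (Fin m) k))) ^ r := by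
  apply le_antisymm
  · rw [Ideal.span_le]
    rintro p ⟨s, hs, rfl⟩
    -- the minor factors as (∏ X) * det of a 0-1 matrix
    have hfac : ((blockMat k r m).submatrix id s) =
        Matrix.of fun i i' => (X (s i').1 : MvPolynomial (Fin m) k) *
          ((1 : Matrix (Fin r) (Fin r) (MvPolynomial (Fin m) k)).submatrix id
            (fun i' => (s i').2)) i i' := by
      ext i i'
      simp [blockMat, Matrix.submatrix, Matrix.one_apply, mul_ite]
    rw [hfac, Matrix.det_mul_row]
    exact Ideal.mul_mem_right _ _ (prod_X_mem_pow _)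
  · have hsp : (Ideal.span (Set.range (X : Fin m → MvPolynomial (Fin m) k))) ^ r =
        Ideal.span ((Set.range (X : Fin m → MvPolynomial (Fin m) k)) ^ r) :=
      Submodule.span_pow _ r
    rw [hsp, Ideal.span_le]
    rintro p hp
    rw [Set.mem_pow] at hp
    obtain ⟨f, hf⟩ := hp
    choose j hj using fun i => (f i).2
    have hfprod : p = ∏ i : Fin r, (X (j i) : MvPolynomial (Fin m) k) := by
      rw [← hf, List.prod_ofFn]
      exact Finset.prod_congr rfl fun i _ => (hj i).symm
    apply Ideal.subset_span
    refine ⟨fun i => (j i, i), fun a b hab => by simpa using congrArg Prod.snd hab, ?_⟩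
    have : ((blockMat k r m).submatrix id fun i => (j i, i)) =
        Matrix.diagonal fun i => (X (j i) : MvPolynomial (Fin m) k) := by
      ext i i'
      by_cases h : i = i' <;> simp [blockMat, Matrix.diagonal, h]
    rw [this, Matrix.det_diagonal, hfprod]
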